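/- Let F be a field and A = F[T]_{(T)}. In K^M_2(F(T)), for any a ∈ A, u ∈ A^×, and j ∈ ℤ, one has {1 + aT, uT^j} = {1 + aT, u} − j{1 + aT, −a}; in particular {1 + aT, uT^j} lies in (1 + TA)·K^M_1(A). -/

import Mathlib

open TensorProduct Polynomial

/-- The Steinberg relations inside `F^× ⊗_ℤ F^×`. -/
def steinbergRel (F : Type*) [Field F] :
    Submodule ℤ (TensorProduct ℤ (Additive Fˣ) (Additive Fˣ)) :=
  Submodule.span ℤ {x | ∃ u v : Fˣ, (u : F) + (v : F) = 1 ∧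
    x = (Additive.ofMul u) ⊗ₜ[ℤ] (Additive.ofMul v)}

/-- The second Milnor `K`-group of a field `F`. -/
def MilnorK2 (F : Type*) [Field F] :=
  TensorProduct ℤ (Additive Fˣ) (Additive Fˣ) ⧸ steinbergRel F

noncomputable instance (F : Type*) [Field F] : AddCommGroup (MilnorK2 F) :=
  inferInstanceAs (AddCommGroup
    (TensorProduct ℤ (Additive Fˣ) (Additive Fˣ) ⧸ steinbergRel F))

/-- The Milnor symbol `{x, y}` in `K^M_2(F)`. -/
noncomputable def milnorSymbol {F : Type*} [Field F] (x y : Fˣ) : MilnorK2 F :=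
  Submodule.Quotient.mk ((Additive.ofMul x) ⊗ₜ[ℤ] (Additive.ofMul y))

section Aux

variable {F : Type*} [Field F]

lemma milnorSymbol_mul_right (x y z : Fˣ) :
    milnorSymbol x (y * z) = milnorSymbol x y + milnorSymbol x z := by
  show Submodule.Quotient.mk _ = (Submodule.Quotient.mk _ : _ ⧸ steinbergRel F) + Submodule.Quotient.mk _
  erw [← Submodule.Quotient.mk_add, ← tmul_add]
  rfl

lemma milnorSymbol_mul_left (x y z : Fˣ) :
    milnorSymbol (x * y) z = milnorSymbol x z + milnorSymbol y z := by
  show Submodule.Quotient.mk _ = (Submodule.Quotient.mk _ : _ ⧸ steinbergRel F) + Submodule.Quotient.mk _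
  erw [← Submodule.Quotient.mk_add, ← add_tmul]
  rfl

lemma milnorSymbol_one_right (x : Fˣ) : milnorSymbol x (1 : Fˣ) = 0 := by
  show Submodule.Quotient.mk _ = (0 : _ ⧸ steinbergRel F)
  rw [show Additive.ofMul (1 : Fˣ) = (0 : Additive Fˣ) from rfl, tmul_zero,
    Submodule.Quotient.mk_zero]

lemma milnorSymbol_inv_right (x y : Fˣ) : milnorSymbol x y⁻¹ = - milnorSymbol x y := by
  have h := milnorSymbol_mul_right x y y⁻¹
  rw [mul_inv_cancel, milnorSymbol_one_right] at h
  exact (neg_eq_of_add_eq_zero_right h.symm).symm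

lemma milnorSymbol_zpow (x y : Fˣ) (j : ℤ) :
    milnorSymbol x (y ^ j) = j • milnorSymbol x y := by
  induction j using Int.induction_on with
  | zero => rw [zpow_zero, milnorSymbol_one_right, zero_zsmul]
  | succ n ih =>
      rw [zpow_add_one, milnorSymbol_mul_right, ih, add_zsmul, one_zsmul]
  | pred n ih =>
      rw [zpow_sub_one, milnorSymbol_mul_right, ih, milnorSymbol_inv_right, sub_zsmul,
        one_zsmul]

lemma milnorSymbol_eq_zero (x y : Fˣ) (h : (x : F) + (y : F) = 1) : milnorSymbol x y = 0 := by
  show Submodule.Quotient.mk _ = (0 : _ ⧸ steinbergRel F)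
  rw [Submodule.Quotient.mk_eq_zero]
  exact Submodule.subset_span ⟨x, y, h, rfl⟩

lemma isUnit_one_add_of_not_isUnit {R : Type*} [CommRing R] [Nontrivial R] [IsLocalRing R]
    {x : R} (h : ¬ IsUnit x) : IsUnit (1 + x) := by
  have h2 : IsUnit ((1 + x) + (-x)) := by simp
  rcases IsLocalRing.isUnit_or_isUnit_of_isUnit_add h2 with h3 | h3
  · exact h3
  · exact absurd (by simpa using h3) h

end Aux

set_option maxHeartbeats 1000000 in
/-- Let `F` be a field and `A = F[T]_{(T)}`.  In `K^M_2(F(T))`, for any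
`a ∈ A`, `u ∈ A^×` and `j ∈ ℤ` one has
`{1 + aT, uT^j} = {1 + aT, u} − j·{1 + aT, −a}`; in particular `{1 + aT, uT^j}` lies in
`(1 + T·A)·K^M_1(A)`, the subgroup generated by symbols `{v, w}` with `v ∈ 1 + T·A` and
`w ∈ A^×`. -/
theorem milnorSymbol_one_add_aT_mul_uTj
    (F : Type*) [Field F]
    [hP : (Ideal.span {(X : Polynomial F)}).IsPrime]
    (hsub : (Ideal.span {(X : Polynomial F)}).primeCompl ≤
      Submonoid.comap (RingHom.id (Polynomial F)) (nonZeroDivisors (Polynomial F))) :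
    -- `φ : A → F(T)` is the canonical map from `A = F[T]_{(T)}` to `F(T)`
    ∀ (φ : Localization (Ideal.span {(X : Polynomial F)}).primeCompl →+*
        FractionRing (Polynomial F)),
      φ = IsLocalization.map (FractionRing (Polynomial F)) (RingHom.id (Polynomial F)) hsub →
    ∀ (a : Localization (Ideal.span {(X : Polynomial F)}).primeCompl)
      (u : (Localization (Ideal.span {(X : Polynomial F)}).primeCompl)ˣ) (j : ℤ)
      (v w w₁ w₂ : (FractionRing (Polynomial F))ˣ),
      (v : FractionRing (Polynomial F)) =
        1 + φ a * algebraMap (Polynomial F) (FractionRing (Polynomial F)) X →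
      (w : FractionRing (Polynomial F)) =
        φ u * (algebraMap (Polynomial F) (FractionRing (Polynomial F)) X) ^ j →
      (w₁ : FractionRing (Polynomial F)) = φ u →
      (w₂ : FractionRing (Polynomial F)) = - φ a →
      (milnorSymbol v w = milnorSymbol v w₁ - j • milnorSymbol v w₂
      ∧ milnorSymbol v w ∈ AddSubgroup.closure
          {z : MilnorK2 (FractionRing (Polynomial F)) |
            ∃ (p q : (FractionRing (Polynomial F))ˣ)
              (b : Localization (Ideal.span {(X : Polynomial F)}).primeCompl)
              (c : (Localization (Ideal.span {(X : Polynomial F)}).primeCompl)ˣ),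
              (p : FractionRing (Polynomial F)) =
                1 + algebraMap (Polynomial F) (FractionRing (Polynomial F)) X * φ b ∧
              (q : FractionRing (Polynomial F)) = φ c ∧
              z = milnorSymbol p q}) := by
  intro φ hφ a u j v w w₁ w₂ hv hw hw₁ hw₂
  classical
  set Gen := {z : MilnorK2 (FractionRing (Polynomial F)) |
            ∃ (p q : (FractionRing (Polynomial F))ˣ)
              (b : Localization (Ideal.span {(X : Polynomial F)}).primeCompl)
              (c : (Localization (Ideal.span {(X : Polynomial F)}).primeCompl)ˣ),
              (p : FractionRing (Polynomial F)) =
                1 + algebraMap (Polynomial F) (FractionRing (Polynomial F)) X * φ b ∧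
              (q : FractionRing (Polynomial F)) = φ c ∧
              z = milnorSymbol p q} with hGen
  have hφa : ∀ p : Polynomial F,
      φ (algebraMap (Polynomial F)
          (Localization (Ideal.span {(X : Polynomial F)}).primeCompl) p)
        = algebraMap (Polynomial F) (FractionRing (Polynomial F)) p := by
    intro p
    rw [hφ]
    exact IsLocalization.map_eq hsub p
  have hinj : Function.Injective (algebraMap (Polynomial F) (FractionRing (Polynomial F))) :=
    IsFractionRing.injective _ _
  have hT0 : algebraMap (Polynomial F) (FractionRing (Polynomial F)) X ≠ 0 := by
    intro h
    exact Polynomial.X_ne_zero (hinj (by simp [h]))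
  set t : (FractionRing (Polynomial F))ˣ := Units.mk0 _ hT0 with ht
  have htv : (t : FractionRing (Polynomial F))
      = algebraMap (Polynomial F) (FractionRing (Polynomial F)) X := rfl
  -- the key lemma, unit case
  have keyU : ∀ (c : (Localization (Ideal.span {(X : Polynomial F)}).primeCompl)ˣ)
      (V : (FractionRing (Polynomial F))ˣ),
      (V : FractionRing (Polynomial F))
        = 1 + algebraMap (Polynomial F) (FractionRing (Polynomial F)) X * φ c →
      milnorSymbol V t ∈ AddSubgroup.closure Gen := by
    intro c V hV
    have hst : milnorSymbol V ((Units.map (φ.toMonoidHom)) (-c) * t) = 0 := by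
      apply milnorSymbol_eq_zero
      simp only [Units.val_mul, Units.coe_map, RingHom.toMonoidHom_eq_coe, MonoidHom.coe_coe,
        Units.val_neg, map_neg]
      rw [htv, hV]
      ring
    rw [milnorSymbol_mul_right] at hst
    have hVt : milnorSymbol V t = - milnorSymbol V (Units.map φ.toMonoidHom (-c)) :=
      eq_neg_of_add_eq_zero_right hst
    rw [hVt]
    refine AddSubgroup.neg_mem _ (AddSubgroup.subset_closure ?_)
    rw [hGen]
    refine ⟨V, _, (c : Localization (Ideal.span {(X : Polynomial F)}).primeCompl), -c, hV, ?_, rfl⟩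
    simp [Units.coe_map]
  -- the key lemma, general case
  have key : ∀ (b : Localization (Ideal.span {(X : Polynomial F)}).primeCompl)
      (V : (FractionRing (Polynomial F))ˣ),
      (V : FractionRing (Polynomial F))
        = 1 + algebraMap (Polynomial F) (FractionRing (Polynomial F)) X * φ b →
      milnorSymbol V t ∈ AddSubgroup.closure Gen := by
    intro b V hV
    by_cases hb : IsUnit b
    · exact keyU hb.unit V (by rw [hV, IsUnit.unit_spec])
    · set τ : Localization (Ideal.span {(X : Polynomial F)}).primeCompl :=
        algebraMap (Polynomial F) (Localization (Ideal.span {(X : Polynomial F)}).primeCompl) X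
        with hτdef
      have hτ : ¬ IsUnit τ := by
        rw [hτdef, IsLocalization.AtPrime.isUnit_to_map_iff
          (Localization (Ideal.span {(X : Polynomial F)}).primeCompl)
          (Ideal.span {(X : Polynomial F)})]
        exact fun hmem => hmem (Ideal.mem_span_singleton_self X)
      have hb1 : IsUnit (b - 1) := by
        have h1 := (IsLocalRing.isUnit_one_sub_self_of_mem_nonunits b
          (mem_nonunits_iff.mpr hb)).neg
        simp at h1; exact h1
      have he1 : IsUnit (1 + τ) := isUnit_one_add_of_not_isUnit hτ
      set a₂ : Localization (Ideal.span {(X : Polynomial F)}).primeCompl :=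
        (b - 1) * ↑he1.unit⁻¹ with ha₂def
      have ha₂ : IsUnit a₂ := hb1.mul (Units.isUnit _)
      have hu1 : (he1.unit : Localization (Ideal.span {(X : Polynomial F)}).primeCompl)
          = 1 + τ := he1.unit_spec
      have ha₂e : a₂ * (1 + τ) = b - 1 := by
        calc a₂ * (1 + τ)
            = (b - 1) * (↑he1.unit⁻¹ * ↑he1.unit) := by rw [hu1, ha₂def]; ring
          _ = b - 1 := by rw [Units.inv_mul, mul_one]
      have hτa₂ : ¬ IsUnit (τ * a₂) := fun h => hτ (isUnit_of_mul_isUnit_left h)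
      have he2 : IsUnit (1 + τ * a₂) := isUnit_one_add_of_not_isUnit hτa₂
      have hprod : (1 + τ) * (1 + τ * a₂) = 1 + τ * b := by linear_combination τ * ha₂e
      have hVsplit : V = Units.map φ.toMonoidHom he1.unit * Units.map φ.toMonoidHom he2.unit := by
        ext
        simp only [Units.val_mul, Units.coe_map, RingHom.toMonoidHom_eq_coe, MonoidHom.coe_coe,
          IsUnit.unit_spec]
        rw [← map_mul, hprod, map_add, map_one, map_mul, hφa, hV]
      rw [hVsplit, milnorSymbol_mul_left]
      refine AddSubgroup.add_mem _ (keyU 1 _ ?_) (keyU ha₂.unit _ ?_)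
      · simp only [Units.coe_map, RingHom.toMonoidHom_eq_coe, MonoidHom.coe_coe,
          IsUnit.unit_spec, Units.val_one, map_one, map_add, hφa, mul_one]
        rw [hτdef, hφa]
      · simp only [Units.coe_map, RingHom.toMonoidHom_eq_coe, MonoidHom.coe_coe,
          IsUnit.unit_spec, map_add, map_one, map_mul, hφa]
        rw [hτdef, hφa]
  -- main computation
  have hwvt : w = w₁ * t ^ j := by
    ext
    rw [Units.val_mul, Units.val_zpow_eq_zpow_val, hw, hw₁, htv]
  have hst : milnorSymbol v (w₂ * t) = 0 := by
    apply milnorSymbol_eq_zero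
    rw [Units.val_mul, htv, hw₂, hv]
    ring
  rw [milnorSymbol_mul_right] at hst
  have hvt : milnorSymbol v t = - milnorSymbol v w₂ := eq_neg_of_add_eq_zero_right hst
  constructor
  · rw [hwvt, milnorSymbol_mul_right, milnorSymbol_zpow, hvt, zsmul_neg, ← sub_eq_add_neg]
  · rw [hwvt, milnorSymbol_mul_right, milnorSymbol_zpow]
    refine AddSubgroup.add_mem _ (AddSubgroup.subset_closure ?_)
      (AddSubgroup.zsmul_mem _ (key a v (by rw [hv]; ring)) j)
    rw [hGen]
    exact ⟨v, w₁, a, u, by rw [hv]; ring, hw₁, rfl⟩
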